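/- For every integer a > 1, log_φ(a) is irrational, where φ is the golden ratio. -/

import Mathlib

open goldenRatio in
lemma gold_pow_irrational (n : ℕ) : Irrational (Real.goldenRatio ^ (n + 1)) := by
  rw [← Real.goldenRatio_mul_fib_succ_add_fib n, mul_comm]
  exact ((Real.goldenRatio_irrational.natCast_mul (Nat.fib_pos.mpr n.succ_pos).ne').add_natCast _)

/-- For every integer `a > 1`, `log_φ a` is irrational, where `φ` is the golden ratio. -/
theorem logPhi_irrational
    (φ : ℝ) (hφ : φ = (1 + Real.sqrt 5) / 2)
    (a : ℕ) (ha : 1 < a) :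
    Irrational (Real.log a / Real.log φ) := by
  have hφg : φ = Real.goldenRatio := hφ
  subst hφg
  have hφ1 : (1:ℝ) < Real.goldenRatio := Real.one_lt_goldenRatio
  have hlogφ : 0 < Real.log Real.goldenRatio := Real.log_pos hφ1
  have ha1 : (1:ℝ) < (a:ℝ) := by exact_mod_cast ha
  have hloga : 0 < Real.log a := Real.log_pos ha1
  rintro ⟨q, hq⟩
  have hq' : Real.log a = q * Real.log Real.goldenRatio := by
    field_simp at hq
    linarith [hq]
  have hqpos : 0 < (q:ℝ) := by
    by_contra h
    push_neg at h
    nlinarith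
  have hqpos' : 0 < q := by exact_mod_cast hqpos
  have hnum : 0 < q.num := Rat.num_pos.mpr hqpos'
  -- q = num/den, so den * log a = num * log φ
  have hden : (q.den : ℝ) ≠ 0 := by positivity
  have key : (q.den : ℝ) * Real.log a = (q.num : ℝ) * Real.log Real.goldenRatio := by
    have : (q:ℝ) = (q.num : ℝ) / (q.den : ℝ) := by exact_mod_cast (Rat.num_div_den q).symm
    rw [hq', this]; field_simp
  have key2 : Real.log ((a:ℝ) ^ q.den) = Real.log (Real.goldenRatio ^ q.num.toNat) := by
    rw [Real.log_pow, Real.log_pow]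
    have hto : ((q.num.toNat : ℕ) : ℝ) = ((q.num : ℤ) : ℝ) := by
      exact_mod_cast Int.toNat_of_nonneg hnum.le
    rw [hto]; exact key
  have hpow : ((a:ℝ) ^ q.den) = Real.goldenRatio ^ q.num.toNat := by
    have h1 : (0:ℝ) < (a:ℝ) ^ q.den := by positivity
    have h2 : (0:ℝ) < Real.goldenRatio ^ q.num.toNat := by positivity
    rw [← Real.exp_log h1, ← Real.exp_log h2, key2]
  have hn : ∃ m, q.num.toNat = m + 1 := by
    have : q.num.toNat ≠ 0 := by
      omega
    exact Nat.exists_eq_succ_of_ne_zero this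
  obtain ⟨m, hm⟩ := hn
  have hirr : Irrational ((a:ℝ) ^ q.den) := by
    rw [hpow, hm]; exact gold_pow_irrational m
  exact hirr ⟨((a:ℚ) ^ q.den), by push_cast; ring⟩
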